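/- Let a > 0 and let u : ℝ → ℝ be continuously differentiable on [−a, a] with u(−a) = u(a) = 0. Then ∫_{−a}^{a} (u'(x))² dx ≥ (π/(2a))² · ∫_{−a}^{a} (u(x))² dx. -/

import Mathlib

open Real Set

/-- Poincaré–Wirtinger inequality for the Dirichlet problem on `(−a, a)`:
`∫ (u')² ≥ (π/(2a))² ∫ u²` for `u` continuously differentiable on `[−a, a]`
vanishing at the endpoints. -/
theorem stmt_5 (a : ℝ) (ha : 0 < a) (u : ℝ → ℝ)
    (hdiff : ∀ x ∈ Set.Icc (-a) a, HasDerivAt u (deriv u x) x)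
    (hcont : ContinuousOn (deriv u) (Set.Icc (-a) a))
    (hbd₁ : u (-a) = 0) (hbd₂ : u a = 0) :
    (∫ x in (-a)..a, (deriv u x) ^ 2) ≥ (π / (2 * a)) ^ 2 * ∫ x in (-a)..a, (u x) ^ 2 := by
  have hπ := Real.pi_pos
  set c : ℝ := π / (2 * a) with hc_def
  have hc : 0 < c := by positivity
  have hca : c * a = π / 2 := by rw [hc_def]; field_simp
  have hsub : Ioo (-a) a ⊆ Icc (-a) a := Ioo_subset_Icc_self
  -- cosine is positive on the open interval
  have hcos : ∀ x ∈ Ioo (-a) a, 0 < Real.cos (c * x) := by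
    intro x hx
    apply Real.cos_pos_of_mem_Ioo
    constructor
    · have : c * (-a) < c * x := by nlinarith [hx.1]
      nlinarith
    · nlinarith [hx.2]
  -- continuity of u
  have hu_cont : ContinuousOn u (Icc (-a) a) := fun x hx =>
    (hdiff x hx).continuousAt.continuousWithinAt
  -- bound M on |deriv u|
  obtain ⟨M₀, hM₀⟩ := isCompact_Icc.exists_bound_of_continuousOn hcont
  set M : ℝ := max M₀ 0 with hM_def
  have hM0 : 0 ≤ M := le_max_right _ _
  have hM : ∀ x ∈ Icc (-a) a, |deriv u x| ≤ M := fun x hx =>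
    (hM₀ x hx).trans (le_max_left _ _)
  -- Lipschitz bound for u
  have hulip : ∀ x ∈ Icc (-a) a, ∀ y ∈ Icc (-a) a, |u y - u x| ≤ M * |y - x| := by
    intro x hx y hy
    have := (convex_Icc (-a) a).norm_image_sub_le_of_norm_hasDerivWithin_le
      (fun z hz => (hdiff z hz).hasDerivWithinAt) (fun z hz => hM z hz) hx hy
    simpa [Real.norm_eq_abs] using this
  have hu_bound : ∀ x ∈ Icc (-a) a, |u x| ≤ M * (a - |x|) := by
    intro x hx
    rcases le_or_gt 0 x with hx0 | hx0
    · have h1 : |u x - u a| ≤ M * |x - a| :=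
        hulip a (by constructor <;> linarith) x hx
      have hxa : |x - a| = a - x := by rw [abs_of_nonpos (by linarith [hx.2])]; ring
      have : |x| = x := abs_of_nonneg hx0
      rw [hbd₂, sub_zero] at h1
      rw [this]; rw [hxa] at h1; exact h1
    · have h1 : |u x - u (-a)| ≤ M * |x - (-a)| :=
        hulip (-a) (by constructor <;> linarith) x hx
      have hxa : |x - (-a)| = a + x := by rw [abs_of_nonneg (by linarith [hx.1])]; ring
      have hax : |x| = -x := abs_of_nonpos hx0.le
      rw [hbd₁, sub_zero] at h1
      rw [hax]; rw [hxa] at h1; linarith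
  -- lower bound for cos on the open interval
  have hcos_lb : ∀ x ∈ Ioo (-a) a, 2 / π * (c * (a - |x|)) ≤ Real.cos (c * x) := by
    intro x hx
    have habs : |x| < a := abs_lt.2 ⟨hx.1, hx.2⟩
    have h1 : Real.cos (c * x) = Real.cos (c * |x|) := by
      rcases le_or_gt 0 x with h | h
      · rw [abs_of_nonneg h]
      · rw [abs_of_nonpos h.le, mul_neg, Real.cos_neg]
    have h2 : c * |x| = π / 2 - c * (a - |x|) := by rw [← hca]; ring
    rw [h1, h2, Real.cos_pi_div_two_sub]
    apply Real.mul_le_sin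
    · exact mul_nonneg hc.le (by linarith)
    · nlinarith [abs_nonneg x]
  -- the auxiliary functions
    -- F x = -c tan(cx) u(x)^2 ; G = F'
  set F : ℝ → ℝ := fun x => -c * Real.tan (c * x) * u x ^ 2 with hF_def
  set G : ℝ → ℝ := fun x =>
    -c * (1 / Real.cos (c * x) ^ 2 * c) * u x ^ 2 +
      -c * Real.tan (c * x) * (2 * u x * deriv u x) with hG_def
  set g : ℝ → ℝ := fun x => deriv u x ^ 2 - c ^ 2 * u x ^ 2 with hg_def
  -- F has derivative G on the open interval
  have hFderiv : ∀ x ∈ Ioo (-a) a, HasDerivAt F (G x) x := by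
    intro x hx
    have hcne : Real.cos (c * x) ≠ 0 := (hcos x hx).ne'
    have h1 : HasDerivAt (fun y : ℝ => c * y) c x := by
      simpa using (hasDerivAt_id x).const_mul c
    have h2 : HasDerivAt (fun y => Real.tan (c * y)) (1 / Real.cos (c * x) ^ 2 * c) x :=
      (Real.hasDerivAt_tan hcne).comp x h1
    have h3 : HasDerivAt (fun y => u y ^ 2) (2 * u x * deriv u x) x := by
      have := (hdiff x (hsub hx)).fun_pow 2
      simpa [mul_comm, mul_assoc, mul_left_comm] using this
    have := ((h2.const_mul (-c)).fun_mul h3)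
    simpa [hF_def, hG_def, mul_comm, mul_assoc, mul_left_comm] using this
  -- pointwise inequality G ≤ g
  have hGg : ∀ x ∈ Ioo (-a) a, G x ≤ g x := by
    intro x hx
    have hcne : Real.cos (c * x) ≠ 0 := (hcos x hx).ne'
    have htan : 1 / Real.cos (c * x) ^ 2 = 1 + Real.tan (c * x) ^ 2 := by
      rw [one_div, ← Real.inv_one_add_tan_sq hcne, inv_inv]
    simp only [hG_def, hg_def, htan]
    nlinarith [sq_nonneg (deriv u x + c * Real.tan (c * x) * u x)]
  -- bound on F
  have hF_bound : ∀ x ∈ Ioo (-a) a, |F x| ≤ π / 2 * M ^ 2 * (a - |x|) := by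
    intro x hx
    have habs : |x| < a := abs_lt.2 ⟨hx.1, hx.2⟩
    have hd : 0 < a - |x| := by linarith
    have hcosx := hcos x hx
    have hclb := hcos_lb x hx
    have htanb : |Real.tan (c * x)| ≤ π / (2 * c * (a - |x|)) := by
      rw [Real.tan_eq_sin_div_cos, abs_div, abs_of_pos hcosx]
      have h1 : |Real.sin (c * x)| ≤ 1 := Real.abs_sin_le_one _
      have h2 : 2 / π * (c * (a - |x|)) > 0 := by positivity
      calc |Real.sin (c * x)| / Real.cos (c * x) ≤ 1 / (2 / π * (c * (a - |x|))) := by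
            apply div_le_div₀ zero_le_one h1 h2 hclb
        _ = π / (2 * c * (a - |x|)) := by
            rw [div_eq_div_iff (by positivity) (by positivity)]
            field_simp
    have hub := hu_bound x (hsub hx)
    have habsF : |F x| = c * |Real.tan (c * x)| * u x ^ 2 := by
      rw [hF_def]
      rw [abs_mul, abs_mul, abs_neg, abs_of_pos hc, abs_of_nonneg (sq_nonneg (u x))]
    rw [habsF]
    have hu2 : u x ^ 2 ≤ M ^ 2 * (a - |x|) ^ 2 := by
      have := sq_abs (u x) ▸ pow_le_pow_left₀ (abs_nonneg (u x)) hub 2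
      calc u x ^ 2 = |u x| ^ 2 := (sq_abs _).symm
        _ ≤ (M * (a - |x|)) ^ 2 := pow_le_pow_left₀ (abs_nonneg _) hub 2
        _ = M ^ 2 * (a - |x|) ^ 2 := by ring
    calc c * |Real.tan (c * x)| * u x ^ 2
        ≤ c * (π / (2 * c * (a - |x|))) * (M ^ 2 * (a - |x|) ^ 2) := by
          apply mul_le_mul (mul_le_mul_of_nonneg_left htanb hc.le) hu2 (sq_nonneg _)
          positivity
      _ = π / 2 * M ^ 2 * (a - |x|) := by field_simp
  -- integrability of g
  have hg_cont : ContinuousOn g (Icc (-a) a) := by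
    apply ContinuousOn.sub
    · exact hcont.pow 2
    · exact (continuousOn_const.mul (hu_cont.pow 2))
  have hg_int : IntervalIntegrable g MeasureTheory.volume (-a) a :=
    hg_cont.intervalIntegrable_of_Icc (by linarith)
  obtain ⟨C₀, hC₀⟩ := isCompact_Icc.exists_bound_of_continuousOn hg_cont
  set C : ℝ := max C₀ 0 with hC_def
  have hC0 : 0 ≤ C := le_max_right _ _
  have hC : ∀ x ∈ Icc (-a) a, ‖g x‖ ≤ C := fun x hx => (hC₀ x hx).trans (le_max_left _ _)
  set I : ℝ := ∫ x in (-a)..a, g x with hI_def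
  -- key inequality on shrunken intervals
  have key : ∀ ε ∈ Ioo (0:ℝ) a,
      F (a - ε) - F (-a + ε) ≤ ∫ x in (-a + ε)..(a - ε), g x := by
    intro ε hε
    have hle : -a + ε ≤ a - ε := by linarith [hε.2]
    have hsub2 : Icc (-a + ε) (a - ε) ⊆ Ioo (-a) a := by
      intro x hx; exact ⟨by linarith [hx.1, hε.1], by linarith [hx.2, hε.1]⟩
    have hsub3 : Set.uIcc (-a + ε) (a - ε) ⊆ Ioo (-a) a := by
      rw [Set.uIcc_of_le hle]; exact hsub2
    have hG_cont : ContinuousOn G (Icc (-a + ε) (a - ε)) := by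
      have hc1 : ContinuousOn (fun x => Real.cos (c * x)) (Icc (-a + ε) (a - ε)) :=
        (Real.continuous_cos.comp (continuous_const.mul continuous_id)).continuousOn
      have hcne : ∀ x ∈ Icc (-a + ε) (a - ε), Real.cos (c * x) ^ 2 ≠ 0 := by
        intro x hx; exact pow_ne_zero 2 (hcos x (hsub2 hx)).ne'
      have htan_cont : ContinuousOn (fun x => Real.tan (c * x)) (Icc (-a + ε) (a - ε)) := by
        simp only [Real.tan_eq_sin_div_cos]
        exact ((Real.continuous_sin.comp
          (continuous_const.mul continuous_id)).continuousOn).div hc1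
          (fun x hx => (hcos x (hsub2 hx)).ne')
      have hu_cont' : ContinuousOn u (Icc (-a + ε) (a - ε)) :=
        hu_cont.mono (fun x hx => hsub (hsub2 hx))
      have hdu_cont' : ContinuousOn (deriv u) (Icc (-a + ε) (a - ε)) :=
        hcont.mono (fun x hx => hsub (hsub2 hx))
      apply ContinuousOn.add
      · exact (continuousOn_const.mul (((continuousOn_const.div (hc1.pow 2) hcne).mul
          continuousOn_const))).mul (hu_cont'.pow 2)
      · exact (continuousOn_const.mul htan_cont).mul
          ((continuousOn_const.mul hu_cont').mul hdu_cont')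
    have hG_int : IntervalIntegrable G MeasureTheory.volume (-a + ε) (a - ε) :=
      hG_cont.intervalIntegrable_of_Icc hle
    have hftc : ∫ x in (-a + ε)..(a - ε), G x = F (a - ε) - F (-a + ε) :=
      intervalIntegral.integral_eq_sub_of_hasDerivAt
        (fun x hx => hFderiv x (hsub3 hx)) hG_int
    rw [← hftc]
    have hg_int' : IntervalIntegrable g MeasureTheory.volume (-a + ε) (a - ε) := by
      apply hg_int.mono_set
      rw [Set.uIcc_of_le hle, Set.uIcc_of_le (show -a ≤ a by linarith)]
      exact hsub2.trans hsub
    exact intervalIntegral.integral_mono_on hle hG_int hg_int'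
      (fun x hx => hGg x (hsub2 hx))
  -- the integral over shrunken intervals tends to I
  have hIoo_mem : Ioo (0:ℝ) a ∈ nhdsWithin (0:ℝ) (Ioi 0) :=
    Ioo_mem_nhdsGT_of_mem ⟨le_refl 0, ha⟩
  have hsplit : ∀ ε ∈ Ioo (0:ℝ) a,
      |(∫ x in (-a + ε)..(a - ε), g x) - I| ≤ 2 * C * ε := by
    intro ε hε
    have h1 : IntervalIntegrable g MeasureTheory.volume (-a) (-a + ε) := by
      apply hg_int.mono_set
      rw [Set.uIcc_of_le (show -a ≤ -a + ε by linarith [hε.1]),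
        Set.uIcc_of_le (show -a ≤ a by linarith)]
      exact Icc_subset_Icc le_rfl (by linarith [hε.2])
    have h2 : IntervalIntegrable g MeasureTheory.volume (-a + ε) (a - ε) := by
      apply hg_int.mono_set
      rw [Set.uIcc_of_le (show -a + ε ≤ a - ε by linarith [hε.2]),
        Set.uIcc_of_le (show -a ≤ a by linarith)]
      exact Icc_subset_Icc (by linarith [hε.1]) (by linarith [hε.1])
    have h3 : IntervalIntegrable g MeasureTheory.volume (a - ε) a := by
      apply hg_int.mono_set
      rw [Set.uIcc_of_le (show a - ε ≤ a by linarith [hε.1]),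
        Set.uIcc_of_le (show -a ≤ a by linarith)]
      exact Icc_subset_Icc (by linarith [hε.2]) le_rfl
    have hsum : (∫ x in (-a)..(-a + ε), g x) + (∫ x in (-a + ε)..(a - ε), g x)
        + (∫ x in (a - ε)..a, g x) = I := by
      rw [intervalIntegral.integral_add_adjacent_intervals h1 h2,
        intervalIntegral.integral_add_adjacent_intervals (h1.trans h2) h3]
    have hb1 : ‖∫ x in (-a)..(-a + ε), g x‖ ≤ C * ε := by
      have := intervalIntegral.norm_integral_le_of_norm_le_const
        (C := C) (f := g) (a := -a) (b := -a + ε) ?_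
      · calc ‖∫ x in (-a)..(-a + ε), g x‖ ≤ C * |(-a + ε) - (-a)| := this
          _ = C * ε := by rw [(show (-a + ε) - (-a) = ε by ring), abs_of_pos hε.1]
      · intro x hx
        rw [Set.uIoc_of_le (show -a ≤ -a + ε by linarith [hε.1])] at hx
        exact hC x ⟨hx.1.le, by linarith [hx.2, hε.2]⟩
    have hb3 : ‖∫ x in (a - ε)..a, g x‖ ≤ C * ε := by
      have := intervalIntegral.norm_integral_le_of_norm_le_const
        (C := C) (f := g) (a := a - ε) (b := a) ?_
      · calc ‖∫ x in (a - ε)..a, g x‖ ≤ C * |a - (a - ε)| := this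
          _ = C * ε := by rw [(show a - (a - ε) = ε by ring), abs_of_pos hε.1]
      · intro x hx
        rw [Set.uIoc_of_le (show a - ε ≤ a by linarith [hε.1])] at hx
        exact hC x ⟨by linarith [hx.1, hε.2], hx.2⟩
    have : (∫ x in (-a + ε)..(a - ε), g x) - I
        = -((∫ x in (-a)..(-a + ε), g x) + (∫ x in (a - ε)..a, g x)) := by
      linarith [hsum]
    rw [this, abs_neg]
    calc |(∫ x in (-a)..(-a + ε), g x) + (∫ x in (a - ε)..a, g x)|
        ≤ |∫ x in (-a)..(-a + ε), g x| + |∫ x in (a - ε)..a, g x| := abs_add_le _ _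
      _ ≤ C * ε + C * ε := add_le_add hb1 hb3
      _ = 2 * C * ε := by ring
  -- tendsto statements
  have htendI : Filter.Tendsto (fun ε => ∫ x in (-a + ε)..(a - ε), g x)
      (nhdsWithin 0 (Ioi 0)) (nhds I) := by
    have h0 : Filter.Tendsto (fun ε : ℝ => 2 * C * ε) (nhdsWithin 0 (Ioi 0)) (nhds 0) := by
      have : Filter.Tendsto (fun ε : ℝ => 2 * C * ε) (nhds 0) (nhds (2 * C * 0)) :=
        (continuous_const.mul continuous_id).tendsto 0
      simpa using this.mono_left nhdsWithin_le_nhds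
    have hd : Filter.Tendsto (fun ε => (∫ x in (-a + ε)..(a - ε), g x) - I)
        (nhdsWithin 0 (Ioi 0)) (nhds 0) := by
      apply squeeze_zero_norm' _ h0
      filter_upwards [hIoo_mem] with ε hε
      exact hsplit ε hε
    have := hd.add_const I
    simpa using this
  have htendF : Filter.Tendsto (fun ε => F (a - ε) - F (-a + ε))
      (nhdsWithin 0 (Ioi 0)) (nhds 0) := by
    have h0 : Filter.Tendsto (fun ε : ℝ => π * M ^ 2 * ε) (nhdsWithin 0 (Ioi 0)) (nhds 0) := by
      have : Filter.Tendsto (fun ε : ℝ => π * M ^ 2 * ε) (nhds 0) (nhds (π * M ^ 2 * 0)) :=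
        (continuous_const.mul continuous_id).tendsto 0
      simpa using this.mono_left nhdsWithin_le_nhds
    apply squeeze_zero_norm' _ h0
    filter_upwards [hIoo_mem] with ε hε
    have h1 : (a - ε) ∈ Ioo (-a) a := ⟨by linarith [hε.1, hε.2], by linarith [hε.1]⟩
    have h2 : (-a + ε) ∈ Ioo (-a) a := ⟨by linarith [hε.1], by linarith [hε.2]⟩
    have hb1 := hF_bound _ h1
    have hb2 := hF_bound _ h2
    have e1 : |a - ε| = a - ε := abs_of_nonneg (by linarith [hε.2])
    have e2 : |-a + ε| = a - ε := by
      rw [abs_of_nonpos (by linarith [hε.2])]; ring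
    rw [e1] at hb1; rw [e2] at hb2
    have : a - (a - ε) = ε := by ring
    rw [this] at hb1 hb2
    calc ‖F (a - ε) - F (-a + ε)‖ ≤ |F (a - ε)| + |F (-a + ε)| := abs_sub _ _
      _ ≤ π / 2 * M ^ 2 * ε + π / 2 * M ^ 2 * ε := add_le_add hb1 hb2
      _ = π * M ^ 2 * ε := by ring
  -- conclude I ≥ 0
  have hI0 : (0:ℝ) ≤ I := by
    have : (nhdsWithin (0:ℝ) (Ioi 0)).NeBot := nhdsGT_neBot 0
    refine le_of_tendsto_of_tendsto htendF htendI ?_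
    filter_upwards [hIoo_mem] with ε hε
    exact key ε hε
  -- unfold I
  have hu2_int : IntervalIntegrable (fun x => u x ^ 2) MeasureTheory.volume (-a) a :=
    (hu_cont.pow 2).intervalIntegrable_of_Icc (by linarith)
  have hdu2_int : IntervalIntegrable (fun x => deriv u x ^ 2) MeasureTheory.volume (-a) a :=
    (hcont.pow 2).intervalIntegrable_of_Icc (by linarith)
  have hIeq : I = (∫ x in (-a)..a, deriv u x ^ 2) - c ^ 2 * ∫ x in (-a)..a, u x ^ 2 := by
    rw [hI_def, hg_def]
    rw [intervalIntegral.integral_sub hdu2_int (hu2_int.const_mul (c ^ 2)),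
      intervalIntegral.integral_const_mul]
  rw [hIeq] at hI0
  rw [ge_iff_le]
  linarith
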